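/- Let N ≥ 2 and let real numbers a_1 > b_1 > a_2 > b_2 > ⋯ > b_{N-1} > a_N interlace. Let K be a compact subset of ℂ \ [a_N, a_1] at distance d > 0 from [a_N, a_1] and contained in the disk of radius R_0. Then for every z ∈ K, |∑_{i=1}^N 1/(z - a_i) − ∑_{i=1}^{N-1} 1/(z - b_i)| ≤ 10(d + R_0)/d². -/

import Mathlib

/-- Potential function: antiderivative of `s ↦ (max d |s|)⁻²`, normalized odd. -/
noncomputable def Hfun (d s : ℝ) : ℝ :=
  if s < -d then -(2/d) - 1/s else if s ≤ d then s / d^2 else 2/d - 1/s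

lemma Hfun_left {d s : ℝ} (h : s < -d) : Hfun d s = -(2/d) - 1/s := by
  simp [Hfun, h]

lemma Hfun_mid {d s : ℝ} (h1 : -d ≤ s) (h2 : s ≤ d) : Hfun d s = s / d^2 := by
  simp [Hfun, not_lt.mpr h1, h2]

lemma Hfun_right {d s : ℝ} (hd : 0 < d) (h : d < s) : Hfun d s = 2/d - 1/s := by
  have h1 : ¬ s < -d := by linarith
  simp [Hfun, h1, not_le.mpr h]

lemma Hfun_left_bounds {d s : ℝ} (hd : 0 < d) (h : s < -d) :
    -(2/d) ≤ Hfun d s ∧ Hfun d s ≤ -(1/d) := by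
  rw [Hfun_left h]
  have hs : 0 < -s := by linarith
  have h2 : 1/(-s) ≤ 1/d := one_div_le_one_div_of_le hd (by linarith)
  have h3 : 0 < 1/(-s) := by positivity
  have h4 : 1/(-s) = -(1/s) := by rw [one_div, one_div, inv_neg]
  have e2 : (2:ℝ)/d = 2*(1/d) := by ring
  rw [h4] at h2 h3
  constructor <;> linarith

lemma Hfun_mid_bounds {d s : ℝ} (hd : 0 < d) (h1 : -d ≤ s) (h2 : s ≤ d) :
    -(1/d) ≤ Hfun d s ∧ Hfun d s ≤ 1/d := by
  rw [Hfun_mid h1 h2]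
  have e1 : -(1/d) = (-d) / d^2 := by field_simp
  have e2 : (1:ℝ)/d = d / d^2 := by field_simp
  have hd2 : (0:ℝ) < d^2 := by positivity
  rw [e1, e2]
  exact ⟨(div_le_div_iff_of_pos_right hd2).mpr h1, (div_le_div_iff_of_pos_right hd2).mpr h2⟩

lemma Hfun_right_bounds {d s : ℝ} (hd : 0 < d) (h : d < s) :
    1/d ≤ Hfun d s ∧ Hfun d s ≤ 2/d := by
  rw [Hfun_right hd h]
  have hs : 0 < s := by linarith
  have h2 : 1/s ≤ 1/d := one_div_le_one_div_of_le hd (le_of_lt h)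
  have h3 : 0 < 1/s := by positivity
  have e2 : (2:ℝ)/d = 2*(1/d) := by ring
  constructor <;> linarith

lemma Hfun_ge {d : ℝ} (hd : 0 < d) (s : ℝ) : -(2/d) ≤ Hfun d s := by
  have h1d : (0:ℝ) < 1/d := by positivity
  have e2 : (2:ℝ)/d = 2*(1/d) := by ring
  rcases lt_or_ge s (-d) with h | h
  · exact (Hfun_left_bounds hd h).1
  · rcases le_or_gt s d with h' | h'
    · linarith [(Hfun_mid_bounds hd h h').1]
    · linarith [(Hfun_right_bounds hd h').1]

lemma Hfun_le {d : ℝ} (hd : 0 < d) (s : ℝ) : Hfun d s ≤ 2/d := by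
  have h1d : (0:ℝ) < 1/d := by positivity
  have e2 : (2:ℝ)/d = 2*(1/d) := by ring
  rcases lt_or_ge s (-d) with h | h
  · linarith [(Hfun_left_bounds hd h).2]
  · rcases le_or_gt s d with h' | h'
    · linarith [(Hfun_mid_bounds hd h h').2]
    · exact (Hfun_right_bounds hd h').2

lemma Hfun_mono (d : ℝ) (hd : 0 < d) {s t : ℝ} (h : s ≤ t) : Hfun d s ≤ Hfun d t := by
  have h1d : (0:ℝ) < 1/d := by positivity
  have e2 : (2:ℝ)/d = 2*(1/d) := by ring
  rcases lt_or_ge s (-d) with hsL | hs1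
  · rcases lt_or_ge t (-d) with htL | ht1
    · rw [Hfun_left hsL, Hfun_left htL]
      have hts : 0 < -t := by linarith
      have h2 : 1/(-s) ≤ 1/(-t) := one_div_le_one_div_of_le hts (by linarith)
      have e1 : 1/(-s) = -(1/s) := by rw [one_div, one_div, inv_neg]
      have e2 : 1/(-t) = -(1/t) := by rw [one_div, one_div, inv_neg]
      rw [e1, e2] at h2
      linarith
    · have hL := (Hfun_left_bounds hd hsL).2
      rcases le_or_gt t d with ht2 | ht2
      · linarith [(Hfun_mid_bounds hd ht1 ht2).1]
      · linarith [(Hfun_right_bounds hd ht2).1]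
  · rcases le_or_gt s d with hs2 | hs2
    · rcases lt_or_ge t (-d) with htL | ht1
      · linarith
      · rcases le_or_gt t d with ht2 | ht2
        · rw [Hfun_mid hs1 hs2, Hfun_mid ht1 ht2]
          exact (div_le_div_iff_of_pos_right (by positivity)).mpr h
        · linarith [(Hfun_mid_bounds hd hs1 hs2).2, (Hfun_right_bounds hd ht2).1]
    · have htR : d < t := lt_of_lt_of_le hs2 h
      rw [Hfun_right hd hs2, Hfun_right hd htR]
      have h2 : 1/t ≤ 1/s := one_div_le_one_div_of_le (by linarith) h
      linarith

/-- The key per-interval estimate. -/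
lemma Hfun_key (d : ℝ) (hd : 0 < d) (p q : ℝ) (hpq : p < q) :
    q - p ≤ max d |p| * max d |q| * (Hfun d q - Hfun d p) := by
  have hd0 : d ≠ 0 := ne_of_gt hd
  rcases lt_or_ge p (-d) with hpL | hp1
  · have hp0 : p ≠ 0 := by intro h; rw [h] at hpL; linarith
    have hmp : max d |p| = -p := by
      rw [abs_of_neg (show p < 0 by linarith)]; exact max_eq_right (by linarith)
    rcases lt_or_ge q (-d) with hqL | hq1
    · -- both left
      have hq0 : q ≠ 0 := by intro h; rw [h] at hqL; linarith
      have hmq : max d |q| = -q := by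
        rw [abs_of_neg (show q < 0 by linarith)]; exact max_eq_right (by linarith)
      rw [hmp, hmq, Hfun_left hpL, Hfun_left hqL]
      have e : -p * -q * ((-(2/d) - 1/q) - (-(2/d) - 1/p)) = q - p := by
        field_simp
        ring
      rw [e]
    · rcases le_or_gt q d with hq2 | hq2
      · -- left, mid
        have hmq : max d |q| = d := max_eq_left (abs_le.mpr ⟨hq1, hq2⟩)
        rw [hmp, hmq, Hfun_left hpL, Hfun_mid hq1 hq2]
        have e : -p * d * (q / d^2 - (-(2/d) - 1/p)) = (-(p*q) - 2*p*d - d^2)/d := by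
          field_simp
          ring
        rw [e, le_div_iff₀ hd]
        nlinarith [mul_nonpos_of_nonpos_of_nonneg (show p + d ≤ 0 by linarith)
          (show 0 ≤ q + d by linarith)]
      · -- left, right
        have hmq : max d |q| = q := by
          rw [abs_of_pos (show 0 < q by linarith)]; exact max_eq_right (by linarith)
        rw [hmp, hmq, Hfun_left hpL, Hfun_right hd hq2]
        have hq0 : q ≠ 0 := by intro h; rw [h] at hq2; linarith
        have e : -p * q * ((2/d - 1/q) - (-(2/d) - 1/p)) = (-(4*p*q) + p*d - q*d)/d := by
          field_simp
          ring
        rw [e, le_div_iff₀ hd]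
        nlinarith [mul_pos (show 0 < -p - d by linarith) (show 0 < q - d by linarith),
          mul_lt_mul'' (show d < -p by linarith) hq2 (le_of_lt hd) (le_of_lt hd)]
  · rcases le_or_gt p d with hp2 | hp2
    · have hmp : max d |p| = d := max_eq_left (abs_le.mpr ⟨hp1, hp2⟩)
      rcases le_or_gt q d with hq2 | hq2
      · -- both mid
        have hmq : max d |q| = d := max_eq_left (abs_le.mpr ⟨by linarith, hq2⟩)
        rw [hmp, hmq, Hfun_mid hp1 hp2, Hfun_mid (by linarith) hq2]
        have e : d * d * (q / d^2 - p / d^2) = q - p := by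
          field_simp
        rw [e]
      · -- mid, right
        have hmq : max d |q| = q := by
          rw [abs_of_pos (show 0 < q by linarith)]; exact max_eq_right (by linarith)
        rw [hmp, hmq, Hfun_mid hp1 hp2, Hfun_right hd hq2]
        have hq0 : q ≠ 0 := by intro h; rw [h] at hq2; linarith
        have e : d * q * ((2/d - 1/q) - p / d^2) = (2*q*d - d^2 - p*q)/d := by
          field_simp
        rw [e, le_div_iff₀ hd]
        nlinarith [mul_nonneg (show 0 ≤ d - p by linarith) (show 0 ≤ q - d by linarith)]
    · -- both right
      have hq2 : d < q := lt_trans hp2 hpq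
      have hp0 : p ≠ 0 := by intro h; rw [h] at hp2; linarith
      have hq0 : q ≠ 0 := by intro h; rw [h] at hq2; linarith
      have hmp : max d |p| = p := by
        rw [abs_of_pos (show 0 < p by linarith)]; exact max_eq_right (by linarith)
      have hmq : max d |q| = q := by
        rw [abs_of_pos (show 0 < q by linarith)]; exact max_eq_right (by linarith)
      rw [hmp, hmq, Hfun_right hd hp2, Hfun_right hd hq2]
      have e : p * q * ((2/d - 1/q) - (2/d - 1/p)) = q - p := by
        field_simp
        ring
      rw [e]

/-- Per-term bound for the difference of two resolvent terms. -/
lemma term_bound (d : ℝ) (hd : 0 < d) (z : ℂ) (p q : ℝ) (hpq : p < q)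
    (hp : max d |p - z.re| ≤ ‖z - (p : ℂ)‖)
    (hq : max d |q - z.re| ≤ ‖z - (q : ℂ)‖) :
    ‖(z - (q : ℂ))⁻¹ - (z - (p : ℂ))⁻¹‖ ≤
      Hfun d (q - z.re) - Hfun d (p - z.re) := by
  have hA : 0 < ‖z - (q : ℂ)‖ :=
    lt_of_lt_of_le hd (le_trans (le_max_left _ _) hq)
  have hB : 0 < ‖z - (p : ℂ)‖ :=
    lt_of_lt_of_le hd (le_trans (le_max_left _ _) hp)
  have hzq : (z - (q : ℂ)) ≠ 0 := by
    intro h0; rw [h0, norm_zero] at hA; exact lt_irrefl _ hA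
  have hzp : (z - (p : ℂ)) ≠ 0 := by
    intro h0; rw [h0, norm_zero] at hB; exact lt_irrefl _ hB
  have key : (z - (q : ℂ))⁻¹ - (z - (p : ℂ))⁻¹ =
      (((q - p : ℝ)) : ℂ) * ((z - (q : ℂ))⁻¹ * (z - (p : ℂ))⁻¹) := by
    push_cast
    field_simp
    ring
  rw [key, norm_mul, norm_mul, norm_inv, norm_inv, Complex.norm_real, Real.norm_eq_abs,
    abs_of_pos (show (0:ℝ) < q - p by linarith)]
  have hΔ : 0 ≤ Hfun d (q - z.re) - Hfun d (p - z.re) := by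
    have := Hfun_mono d hd (show p - z.re ≤ q - z.re by linarith)
    linarith
  have hkey := Hfun_key d hd (p - z.re) (q - z.re) (by linarith)
  have hMp : 0 ≤ max d |p - z.re| := le_trans (le_of_lt hd) (le_max_left _ _)
  have hMq : 0 ≤ max d |q - z.re| := le_trans (le_of_lt hd) (le_max_left _ _)
  have h2 : q - p ≤ (Hfun d (q - z.re) - Hfun d (p - z.re)) *
      (‖z - (q : ℂ)‖ * ‖z - (p : ℂ)‖) := by
    have hm : max d |p - z.re| * max d |q - z.re| ≤
        ‖z - (p : ℂ)‖ * ‖z - (q : ℂ)‖ :=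
      mul_le_mul hp hq hMq (le_of_lt hB)
    calc q - p = (q - z.re) - (p - z.re) := by ring
      _ ≤ max d |p - z.re| * max d |q - z.re| *
            (Hfun d (q - z.re) - Hfun d (p - z.re)) := hkey
      _ ≤ (‖z - (p : ℂ)‖ * ‖z - (q : ℂ)‖) *
            (Hfun d (q - z.re) - Hfun d (p - z.re)) :=
          mul_le_mul_of_nonneg_right hm hΔ
      _ = _ := by ring
  have e : (q - p) * ((‖z - (q : ℂ)‖)⁻¹ * (‖z - (p : ℂ)‖)⁻¹)
      = (q - p) / (‖z - (q : ℂ)‖ * ‖z - (p : ℂ)‖) := by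
    rw [div_eq_mul_inv, mul_inv]
  rw [e, div_le_iff₀ (by positivity)]
  linarith

theorem interlacing_stieltjes_diff_bound (N : ℕ) (hN : 2 ≤ N) (a b : ℕ → ℝ)
    (hinter : ∀ i, 1 ≤ i → i ≤ N - 1 → b i < a i ∧ a (i + 1) < b i)
    (K : Set ℂ) (hK : IsCompact K) (d R₀ : ℝ) (hd : 0 < d)
    (hdist : ∀ z ∈ K, ∀ x ∈ Set.Icc (a N) (a 1), d ≤ ‖z - (x : ℂ)‖)
    (hR₀ : ∀ z ∈ K, ‖z‖ ≤ R₀) :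
    ∀ z ∈ K,
      ‖(∑ i ∈ Finset.Icc 1 N, (z - (a i : ℂ))⁻¹) -
          ∑ i ∈ Finset.Icc 1 (N - 1), (z - (b i : ℂ))⁻¹‖ ≤ 10 * (d + R₀) / d ^ 2 := by
  intro z hz
  -- a is antitone on [1, N]
  have ha_le : ∀ j, j ≤ N → ∀ i, 1 ≤ i → i ≤ j → a j ≤ a i := by
    intro j
    induction j with
    | zero => intro _ i h1 h2; omega
    | succ k ih =>
      intro hkN i h1 h2
      rcases Nat.eq_or_lt_of_le h2 with h | h
      · rw [h]
      · have hik : i ≤ k := by omega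
        have hb := hinter k (by omega) (by omega)
        have := ih (by omega) i h1 hik
        linarith [hb.1, hb.2]
  have hmemA : ∀ i, 1 ≤ i → i ≤ N → a i ∈ Set.Icc (a N) (a 1) := by
    intro i h1 h2
    exact ⟨ha_le N le_rfl i h1 h2, ha_le i h2 1 le_rfl h1⟩
  have hmemB : ∀ i, 1 ≤ i → i ≤ N - 1 → b i ∈ Set.Icc (a N) (a 1) := by
    intro i h1 h2
    have hb := hinter i h1 h2
    constructor
    · have : a N ≤ a (i + 1) := ha_le N le_rfl (i + 1) (by omega) (by omega)
      linarith [hb.2]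
    · have : a i ≤ a 1 := ha_le i (by omega) 1 le_rfl h1
      linarith [hb.1]
  have hMax : ∀ t : ℝ, t ∈ Set.Icc (a N) (a 1) →
      max d |t - z.re| ≤ ‖z - (t : ℂ)‖ := by
    intro t ht
    refine max_le (hdist z hz t ht) ?_
    have h1 : (z - (t : ℂ)).re = z.re - t := by
      simp [Complex.sub_re, Complex.ofReal_re]
    have h2 := Complex.abs_re_le_norm (z - (t : ℂ))
    rw [h1] at h2
    calc |t - z.re| = |z.re - t| := abs_sub_comm _ _
      _ ≤ _ := h2
  obtain ⟨M, rfl⟩ : ∃ M, N = M + 1 := ⟨N - 1, by omega⟩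
  simp only [Nat.add_sub_cancel] at hinter hmemB ⊢
  have hM1 : 1 ≤ M := by omega
  have hsum : ∑ i ∈ Finset.Icc 1 (M + 1), (z - (a i : ℂ))⁻¹ =
      (∑ i ∈ Finset.Icc 1 M, (z - (a i : ℂ))⁻¹) + (z - (a (M + 1) : ℂ))⁻¹ :=
    Finset.sum_Icc_succ_top (by omega) _
  have hdiff : (∑ i ∈ Finset.Icc 1 (M + 1), (z - (a i : ℂ))⁻¹) -
      ∑ i ∈ Finset.Icc 1 M, (z - (b i : ℂ))⁻¹ =
      (∑ i ∈ Finset.Icc 1 M, ((z - (a i : ℂ))⁻¹ - (z - (b i : ℂ))⁻¹)) +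
        (z - (a (M + 1) : ℂ))⁻¹ := by
    rw [hsum, Finset.sum_sub_distrib]; ring
  rw [hdiff]
  have hlast : ‖(z - (a (M + 1) : ℂ))⁻¹‖ ≤ 1 / d := by
    rw [norm_inv]
    have h1 : d ≤ ‖z - (a (M + 1) : ℂ)‖ :=
      hdist z hz _ (hmemA (M + 1) (by omega) le_rfl)
    rw [one_div]
    exact inv_anti₀ hd h1
  have hterm : ∀ i ∈ Finset.Icc 1 M,
      ‖(z - (a i : ℂ))⁻¹ - (z - (b i : ℂ))⁻¹‖ ≤
        Hfun d (a i - z.re) - Hfun d (b i - z.re) := by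
    intro i hi
    rw [Finset.mem_Icc] at hi
    have hb := hinter i hi.1 hi.2
    exact term_bound d hd z (b i) (a i) hb.1
      (hMax _ (hmemB i hi.1 hi.2)) (hMax _ (hmemA i hi.1 (by omega)))
  have htel : ∑ i ∈ Finset.Icc 1 M, (Hfun d (a i - z.re) - Hfun d (b i - z.re)) ≤
      Hfun d (a 1 - z.re) - Hfun d (a (M + 1) - z.re) := by
    have step : ∑ i ∈ Finset.Icc 1 M, (Hfun d (a i - z.re) - Hfun d (b i - z.re)) ≤
        ∑ i ∈ Finset.Icc 1 M, (Hfun d (a i - z.re) - Hfun d (a (i + 1) - z.re)) := by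
      apply Finset.sum_le_sum
      intro i hi
      rw [Finset.mem_Icc] at hi
      have hb := hinter i hi.1 hi.2
      have := Hfun_mono d hd (show a (i + 1) - z.re ≤ b i - z.re by linarith [hb.2])
      linarith
    refine le_trans step (le_of_eq ?_)
    rw [← Finset.Ico_add_one_right_eq_Icc, Finset.sum_Ico_eq_sum_range]
    show ∑ i ∈ Finset.range (M + 1 - 1),
        (Hfun d (a (1 + i) - z.re) - Hfun d (a (1 + i + 1) - z.re)) = _
    have hM : M + 1 - 1 = M := rfl
    rw [hM]
    calc ∑ i ∈ Finset.range M,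
          (Hfun d (a (1 + i) - z.re) - Hfun d (a (1 + i + 1) - z.re))
        = ∑ i ∈ Finset.range M,
            ((fun k => Hfun d (a (1 + k) - z.re)) i -
              (fun k => Hfun d (a (1 + k) - z.re)) (i + 1)) := by
          refine Finset.sum_congr rfl fun i _ => ?_
          simp only
          rw [Nat.add_assoc]
      _ = Hfun d (a (1 + 0) - z.re) - Hfun d (a (1 + M) - z.re) :=
          Finset.sum_range_sub' _ M
      _ = Hfun d (a 1 - z.re) - Hfun d (a (M + 1) - z.re) := by
          rw [Nat.add_comm 1 M]
  have hR : 0 ≤ R₀ := le_trans (norm_nonneg z) (hR₀ z hz)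
  calc ‖(∑ i ∈ Finset.Icc 1 M, ((z - (a i : ℂ))⁻¹ - (z - (b i : ℂ))⁻¹)) +
        (z - (a (M + 1) : ℂ))⁻¹‖
      ≤ ‖∑ i ∈ Finset.Icc 1 M, ((z - (a i : ℂ))⁻¹ - (z - (b i : ℂ))⁻¹)‖ +
        ‖(z - (a (M + 1) : ℂ))⁻¹‖ := norm_add_le _ _
    _ ≤ (∑ i ∈ Finset.Icc 1 M,
          ‖(z - (a i : ℂ))⁻¹ - (z - (b i : ℂ))⁻¹‖) + 1 / d :=
        add_le_add (norm_sum_le _ _) hlast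
    _ ≤ (∑ i ∈ Finset.Icc 1 M, (Hfun d (a i - z.re) - Hfun d (b i - z.re))) + 1 / d :=
        add_le_add_left (Finset.sum_le_sum hterm) _
    _ ≤ (Hfun d (a 1 - z.re) - Hfun d (a (M + 1) - z.re)) + 1 / d :=
        add_le_add_left htel _
    _ ≤ 4 / d + 1 / d := by
        have h1 := Hfun_le hd (a 1 - z.re)
        have h2 := Hfun_ge hd (a (M + 1) - z.re)
        have : (4:ℝ)/d = 2/d + 2/d := by ring
        linarith
    _ ≤ 10 * (d + R₀) / d ^ 2 := by
        have e : (4:ℝ)/d + 1/d = 5/d := by ring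
        rw [e, div_le_div_iff₀ hd (by positivity)]
        nlinarith [mul_nonneg hR (le_of_lt hd)]
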